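/- Parallelisation of independent phase rotations: let u₀,...,u_{n-1} ∈ F₂ⁿ be linearly independent binary vectors forming the columns of an invertible matrix U ∈ GL(n,F₂), and let θ₀,...,θ_{n-1} be angles. Then ∏_{i=0}^{n-1} Z_{u_i}^{θ_i} = CX(U)⁻¹ · (∏_{i=0}^{n-1} Z_i^{θ_i}) · CX(U), where Z_i^{θ_i} denotes the single-qubit phase rotation acting on qubit i (i.e., Z_{e_i}^{θ_i} with e_i the i-th standard basis vector). -/

import Mathlib

open Matrix

/-- Phase rotation operator acting diagonally: `Z_u^θ|e⟩ = exp(i2θ(u·e mod 2))|e⟩`. -/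
noncomputable def PR {n : ℕ} (u : Fin n → ZMod 2) (θ : ℝ) :
    Matrix (Fin n → ZMod 2) (Fin n → ZMod 2) ℂ :=
  Matrix.diagonal fun e =>
    Complex.exp (Complex.I * (2 * (θ : ℂ)) * (((∑ i, u i * e i : ZMod 2).val : ℕ) : ℂ))

/-- The CNOT Clifford operator `CX(U)`, sending basis vector `|e⟩` to `|Ue⟩`. -/
def CXmat {n : ℕ} (U : Matrix (Fin n) (Fin n) (ZMod 2)) :
    Matrix (Fin n → ZMod 2) (Fin n → ZMod 2) ℂ :=
  Matrix.of fun e f => if e = U.mulVec f then 1 else 0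

lemma CX_mul {n : ℕ} (U V : Matrix (Fin n) (Fin n) (ZMod 2)) :
    CXmat U * CXmat V = CXmat (U * V) := by
  ext e f
  simp [CXmat, Matrix.mul_apply, mul_ite, ite_mul, Finset.sum_ite_eq',
    Matrix.mulVec_mulVec]

lemma CX_one {n : ℕ} : CXmat (1 : Matrix (Fin n) (Fin n) (ZMod 2)) = 1 := by
  ext e f
  simp [CXmat, Matrix.one_apply, eq_comm]

lemma CX_diag {n : ℕ} (U : Matrix (Fin n) (Fin n) (ZMod 2))
    (d : (Fin n → ZMod 2) → ℂ) :
    CXmat U * Matrix.diagonal (fun f => d (U.mulVec f)) = Matrix.diagonal d * CXmat U := by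
  ext e f
  simp only [CXmat, Matrix.mul_apply, Matrix.diagonal, Matrix.of_apply, mul_ite, ite_mul,
    mul_zero, zero_mul, mul_one, one_mul, Finset.sum_ite_eq, Finset.sum_ite_eq',
    Finset.mem_univ, if_true]
  split_ifs with h <;> simp [h]

lemma prod_diag {α : Type*} [Fintype α] [DecidableEq α] (l : List (α → ℂ)) :
    (l.map Matrix.diagonal).prod = Matrix.diagonal (fun e => (l.map (fun d => d e)).prod) := by
  induction l with
  | nil => simp
  | cons a l ih =>
      simp only [List.map_cons, List.prod_cons, ih, Matrix.diagonal_mul_diagonal]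

/-- Parallelisation of independent phase rotations: if the vectors `u i` form the rows of
an invertible binary matrix `U` (so that bit `i` of `Ue` is `u i · e`), then the product
of the phase rotations `Z_{u i}^{θ i}` equals `CX(U)⁻¹ (∏ᵢ Z_i^{θ i}) CX(U)`, where
`Z_i^{θ i}` is the single-qubit rotation on qubit `i`. -/
theorem phase_rotation_parallelisation {n : ℕ} (u : Fin n → (Fin n → ZMod 2)) (θ : Fin n → ℝ)
    (U : Matrix (Fin n) (Fin n) (ZMod 2)) (hrows : ∀ i, U i = u i) (hU : IsUnit U) :
    (List.ofFn fun i => PR (u i) (θ i)).prod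
      = (CXmat U)⁻¹ *
        (List.ofFn fun i => PR (Pi.single i (1 : ZMod 2)) (θ i)).prod *
        CXmat U := by
  have hdU : IsUnit U.det := (Matrix.isUnit_iff_isUnit_det U).mp hU
  have hUV : U * U⁻¹ = 1 := Matrix.mul_nonsing_inv U hdU
  have hCV : CXmat U * CXmat U⁻¹ = 1 := by rw [CX_mul, hUV, CX_one]
  have hdet : IsUnit (CXmat U).det :=
    IsUnit.of_mul_eq_one (CXmat U⁻¹).det
      (by rw [← Matrix.det_mul, hCV, Matrix.det_one])
  set D : (Fin n → ZMod 2) → ℂ := fun e =>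
    ∏ i, Complex.exp (Complex.I * (2 * (θ i : ℂ)) * (((e i).val : ℕ) : ℂ)) with hD
  have h2 : (List.ofFn fun i => PR (Pi.single i (1 : ZMod 2)) (θ i)).prod
      = Matrix.diagonal D := by
    have heq : (List.ofFn fun i => PR (Pi.single i (1 : ZMod 2)) (θ i))
        = (List.ofFn fun i (e : Fin n → ZMod 2) =>
            Complex.exp (Complex.I * (2 * (θ i : ℂ)) *
              (((∑ j, (Pi.single i (1 : ZMod 2) : Fin n → ZMod 2) j * e j).val : ℕ) : ℂ))).map
            Matrix.diagonal := by
      rw [List.map_ofFn]; rfl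
    rw [heq, prod_diag]
    refine congrArg Matrix.diagonal (funext fun e => ?_)
    rw [List.map_ofFn, List.prod_ofFn, hD]
    refine Finset.prod_congr rfl fun i _ => ?_
    have hs : (∑ j, (Pi.single i (1 : ZMod 2) : Fin n → ZMod 2) j * e j) = e i := by
      simp [Pi.single_apply]
    simp only [Function.comp]
    rw [hs]
  have h1 : (List.ofFn fun i => PR (u i) (θ i)).prod
      = Matrix.diagonal (fun f => D (U.mulVec f)) := by
    have heq : (List.ofFn fun i => PR (u i) (θ i))
        = (List.ofFn fun i (e : Fin n → ZMod 2) =>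
            Complex.exp (Complex.I * (2 * (θ i : ℂ)) *
              (((∑ j, u i j * e j).val : ℕ) : ℂ))).map Matrix.diagonal := by
      rw [List.map_ofFn]; rfl
    rw [heq, prod_diag]
    refine congrArg Matrix.diagonal (funext fun e => ?_)
    rw [List.map_ofFn, List.prod_ofFn, hD]
    refine Finset.prod_congr rfl fun i _ => ?_
    have hs : (U.mulVec e) i = ∑ j, u i j * e j := by
      rw [Matrix.mulVec, ← hrows i]; rfl
    simp only [Function.comp]
    rw [hs]
  have key : CXmat U * (List.ofFn fun i => PR (u i) (θ i)).prod
      = Matrix.diagonal D * CXmat U := by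
    rw [h1, CX_diag]
  calc (List.ofFn fun i => PR (u i) (θ i)).prod
      = (CXmat U)⁻¹ * (CXmat U * (List.ofFn fun i => PR (u i) (θ i)).prod) := by
        rw [← mul_assoc, Matrix.nonsing_inv_mul _ hdet, one_mul]
    _ = (CXmat U)⁻¹ * (Matrix.diagonal D * CXmat U) := by rw [key]
    _ = _ := by rw [h2, mul_assoc]
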